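/- The derivative of the superdeterminant at the identity is the supertrace: let P ∈ M_m(ℂ), Q be an m×n complex matrix, R an n×m complex matrix, and T ∈ M_n(ℂ). Then the function f : ℂ → ℂ defined by f(t) = det( (1 + tP) − t²·Q·(1 + tT)⁻¹·R ) / det(1 + tT), where (1 + tT)⁻¹ denotes the matrix inverse (interpreted as Matrix.inverse, which agrees with the true inverse for t near 0), satisfies HasDerivAt f (tr P − tr T) 0, i.e. f'(0) = tr(P) − tr(T) = Str(fromBlocks P Q R T). -/

import Mathlib

open Matrix

/-- det of an entrywise differentiable matrix family is differentiable. -/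
lemma aux_det_diffAt {k : ℕ} {B : ℂ → Matrix (Fin k) (Fin k) ℂ} {t0 : ℂ}
    (h : ∀ i j, DifferentiableAt ℂ (fun t => B t i j) t0) :
    DifferentiableAt ℂ (fun t => (B t).det) t0 := by
  simp only [Matrix.det_apply, Units.smul_def, zsmul_eq_mul]
  apply DifferentiableAt.fun_sum
  intro σ _
  exact (DifferentiableAt.fun_finsetProd (fun i _ => h (σ i) i)).const_mul _

/-- the derivative of det at the identity is the trace. -/
lemma aux_det_hasDerivAt {k : ℕ} {B : ℂ → Matrix (Fin k) (Fin k) ℂ}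
    (B' : Matrix (Fin k) (Fin k) ℂ)
    (hB : ∀ i j, HasDerivAt (fun t => B t i j) (B' i j) 0)
    (h0 : B 0 = 1) :
    HasDerivAt (fun t => (B t).det) B'.trace 0 := by
  simp only [Matrix.det_apply, Units.smul_def, zsmul_eq_mul]
  have key : ∀ σ : Equiv.Perm (Fin k),
      HasDerivAt (fun t => ((Equiv.Perm.sign σ : ℤ) : ℂ) * ∏ i, B t (σ i) i)
        (((Equiv.Perm.sign σ : ℤ) : ℂ) *
          ∑ i, (∏ j ∈ Finset.univ.erase i, B 0 (σ j) j) • B' (σ i) i) 0 :=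
    fun σ => (HasDerivAt.fun_finsetProd (fun i _ => hB (σ i) i)).const_mul _
  have : HasDerivAt (fun t => ∑ σ : Equiv.Perm (Fin k), ((Equiv.Perm.sign σ : ℤ) : ℂ) * ∏ i, B t (σ i) i)
      (∑ σ : Equiv.Perm (Fin k), ((Equiv.Perm.sign σ : ℤ) : ℂ) *
        ∑ i, (∏ j ∈ Finset.univ.erase i, B 0 (σ j) j) • B' (σ i) i) 0 :=
    HasDerivAt.fun_sum (fun σ (_ : σ ∈ Finset.univ) => key σ)
  convert this using 1
  rw [Finset.sum_eq_single (1 : Equiv.Perm (Fin k))]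
  · simp [h0, Matrix.trace, Matrix.diag, smul_eq_mul]
  · intro σ _ hσ
    have hzero : ∀ i : Fin k, (∏ j ∈ Finset.univ.erase i, B 0 (σ j) j) = 0 := by
      intro i
      obtain ⟨a, ha⟩ : ∃ a, σ a ≠ a := by
        by_contra hc
        push_neg at hc
        exact hσ (Equiv.ext fun x => hc x)
      obtain ⟨j, hji, hj⟩ : ∃ j, j ≠ i ∧ σ j ≠ j := by
        rcases eq_or_ne a i with rfl | hne
        · refine ⟨σ a, ha, fun hc => ha (σ.injective hc)⟩
        · exact ⟨a, hne, ha⟩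
      apply Finset.prod_eq_zero (Finset.mem_erase.mpr ⟨hji, Finset.mem_univ j⟩)
      simp [h0, Matrix.one_apply, hj]
    simp [hzero]
  · simp

/-- the derivative of the superdeterminant at the identity is the
supertrace: with `f(t) = det((1 + tP) − t²·Q·(1 + tT)⁻¹·R) / det(1 + tT)`
(i.e. `f(t) = sdet(1 + t·fromBlocks P Q R T)`, the inverse being the matrix
inverse `Matrix.inverse`, which is `⁻¹` in Mathlib), one has
`f'(0) = tr P − tr T = Str(fromBlocks P Q R T)`. -/
theorem sdet_deriv_at_one {m n : ℕ}
    (P : Matrix (Fin m) (Fin m) ℂ) (Q : Matrix (Fin m) (Fin n) ℂ)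
    (R : Matrix (Fin n) (Fin m) ℂ) (T : Matrix (Fin n) (Fin n) ℂ) :
    HasDerivAt
      (fun t : ℂ =>
        Matrix.det ((1 + t • P) - (t ^ 2) • (Q * (1 + t • T)⁻¹ * R)) /
          Matrix.det (1 + t • T))
      (Matrix.trace P - Matrix.trace T) 0 := by
  -- entries of 1 + t • T are differentiable, value at 0 is 1
  have hTent : ∀ i j : Fin n, HasDerivAt (fun t : ℂ => (1 + t • T) i j) (T i j) 0 := by
    intro i j
    simpa using (hasDerivAt_id (0:ℂ)).mul_const (T i j) |>.const_add ((1 : Matrix (Fin n) (Fin n) ℂ) i j)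
  have hT0 : (fun t : ℂ => 1 + t • T) 0 = 1 := by simp
  -- denominator
  have hden : HasDerivAt (fun t : ℂ => (1 + t • T).det) T.trace 0 :=
    aux_det_hasDerivAt T hTent hT0
  -- det(1+tT) differentiable, nonzero at 0
  have hdetdiff : DifferentiableAt ℂ (fun t : ℂ => (1 + t • T).det) 0 := hden.differentiableAt
  have hdet0 : (fun t : ℂ => (1 + t • T).det) 0 ≠ 0 := by simp
  -- entries of inverse are differentiable at 0
  have hinv : ∀ a b : Fin n, DifferentiableAt ℂ (fun t : ℂ => (1 + t • T)⁻¹ a b) 0 := by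
    intro a b
    have hrw : (fun t : ℂ => (1 + t • T)⁻¹ a b)
        = fun t : ℂ => ((1 + t • T).det)⁻¹ * (1 + t • T).adjugate a b := by
      funext t
      rw [Matrix.inv_def, Ring.inverse_eq_inv]
      simp [Matrix.smul_apply, smul_eq_mul]
    rw [hrw]
    refine DifferentiableAt.mul (hdetdiff.inv hdet0) ?_
    -- adjugate entry is a det of a matrix with differentiable entries
    have : ∀ t : ℂ, (1 + t • T).adjugate a b
        = ((1 + t • T).updateRow b (Pi.single a 1)).det := fun t => Matrix.adjugate_apply _ a b
    simp only [this]
    apply aux_det_diffAt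
    intro i j
    rcases eq_or_ne i b with rfl | hib
    · simp only [Matrix.updateRow_self]
      exact differentiableAt_const _
    · simp only [Matrix.updateRow_ne hib]
      exact (hTent i j).differentiableAt
  -- numerator entries
  have hNdiff : ∀ i j : Fin m, DifferentiableAt ℂ
      (fun t : ℂ => (Q * (1 + t • T)⁻¹ * R) i j) 0 := by
    intro i j
    have : (fun t : ℂ => (Q * (1 + t • T)⁻¹ * R) i j)
        = fun t : ℂ => ∑ b, (∑ a, Q i a * (1 + t • T)⁻¹ a b) * R b j := by
      funext t; simp [Matrix.mul_apply]
    rw [this]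
    exact DifferentiableAt.fun_sum fun b _ =>
      (DifferentiableAt.fun_sum fun a _ => (hinv a b).const_mul _).mul_const _
  have hnument : ∀ i j : Fin m, HasDerivAt
      (fun t : ℂ => ((1 + t • P) - (t ^ 2) • (Q * (1 + t • T)⁻¹ * R) : Matrix (Fin m) (Fin m) ℂ) i j) (P i j) 0 := by
    intro i j
    have h1 : HasDerivAt (fun t : ℂ => (1 + t • P) i j) (P i j) 0 := by
      simpa using (hasDerivAt_id (0:ℂ)).mul_const (P i j) |>.const_add ((1 : Matrix (Fin m) (Fin m) ℂ) i j)
    have h2 : HasDerivAt (fun t : ℂ => t ^ 2 * (Q * (1 + t • T)⁻¹ * R) i j) 0 0 := by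
      have hp : HasDerivAt (fun t : ℂ => t ^ 2) 0 0 := by
        simpa using hasDerivAt_pow 2 (0 : ℂ)
      have := hp.fun_mul (hNdiff i j).hasDerivAt
      simpa using this
    have := h1.fun_sub h2
    simpa [Matrix.sub_apply, Matrix.smul_apply, smul_eq_mul] using this
  have hnum : HasDerivAt
      (fun t : ℂ => ((1 + t • P) - (t ^ 2) • (Q * (1 + t • T)⁻¹ * R)).det) P.trace 0 :=
    aux_det_hasDerivAt P hnument (by simp)
  have := hnum.fun_div hden hdet0
  simpa using this
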